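/- For x,y ∈ (3/16, −1/16) the function f(x,y) = x² + y² + 9/32 + 2·max(|x/8 + 3y/8| − 1/16, −5x/8 + y/8 + 1/16) attains its global minimum over ℝ², with minimum value 25/128. -/
import Mathlib


/-- Squared-diameter objective for the `m = 8` hexagonal torus tiling. -/
noncomputable def hexObj (x y : ℝ) : ℝ :=
  x^2 + y^2 + 9/32 + 2 * max (|x/8 + 3*y/8| - 1/16) (-5*x/8 + y/8 + 1/16)

theorem hexObj_min :
    hexObj (3/16) (-1/16) = 25/128 ∧ ∀ x y : ℝ, 25/128 ≤ hexObj x y := by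
  constructor
  · unfold hexObj
    rw [show |(3:ℝ)/16/8 + 3*(-1/16)/8| = 0 by rw [abs_eq_zero]; ring]
    norm_num
  · intro x y
    unfold hexObj
    have h1 := le_max_left (|x/8 + 3*y/8| - 1/16) (-5*x/8 + y/8 + 1/16)
    have h2 := le_max_right (|x/8 + 3*y/8| - 1/16) (-5*x/8 + y/8 + 1/16)
    have h4 := le_abs_self (x/8 + 3*y/8)
    have h5 := neg_abs_le (x/8 + 3*y/8)
    nlinarith [sq_nonneg (x - 3/16), sq_nonneg (y + 1/16)]
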